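/- If two filters f and g on a finite complex induce the same ordering of the cells, then they have the same birth-death pairs. -/

import Mathlib

open scoped Classical

/-- The `Z/2` boundary matrix of a facet relation. -/
noncomputable def bdry {C : Type*} (facet : C → C → Prop) :
    Matrix C C (ZMod 2) :=
  Matrix.of fun a b => if facet a b then 1 else 0

/-- Cell `i` holds the `f`-lowest nonzero entry of column `j` of `R`. -/
def IsLowF {C : Type*} (f : C → ℝ) (R : Matrix C C (ZMod 2)) (i j : C) : Prop :=
  R i j ≠ 0 ∧ ∀ i', R i' j ≠ 0 → f i' ≤ f i

/-- `R` is a reduction of `Δ` with respect to the ordering of the cells by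
`f`-value: `R = Δ·V` with `V` upper triangular with unit diagonal (w.r.t. the
`f`-order) and distinct lowest nonzero rows among the nonzero columns of `R`. -/
def IsReductionF {C : Type*} [Fintype C] (f : C → ℝ)
    (Δ R : Matrix C C (ZMod 2)) : Prop :=
  ∃ V : Matrix C C (ZMod 2),
    (∀ i j, f j < f i → V i j = 0) ∧ (∀ i, V i i = 1) ∧ R = Δ * V ∧
    ∀ i j j', IsLowF f R i j → IsLowF f R i j' → j = j'

section Aux
open Matrix
set_option linter.unusedSectionVars false
set_option maxHeartbeats 1000000

variable {C : Type*} [Fintype C] {f : C → ℝ} {Δ R V : Matrix C C (ZMod 2)}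

/-- Columns in `Q` of `R` whose lowest nonzero row lies in `P`. -/
noncomputable def lowCols (f : C → ℝ) (R : Matrix C C (ZMod 2)) (P Q : C → Prop) : Finset C :=
  Finset.univ.filter (fun b => Q b ∧ ∃ a, P a ∧ IsLowF f R a b)

theorem low_unique (hfinj : Function.Injective f) {a a' b : C}
    (h : IsLowF f R a b) (h' : IsLowF f R a' b) : a = a' :=
  hfinj (le_antisymm (h'.2 a h.1) (h.2 a' h'.1))

theorem exists_low {a b : C} (h : R a b ≠ 0) : ∃ a₀, IsLowF f R a₀ b := by
  obtain ⟨a₀, ha₀, hmax⟩ := (Finset.univ.filter (fun a' => R a' b ≠ 0)).exists_max_image f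
    ⟨a, by simpa using h⟩
  exact ⟨a₀, by simpa using ha₀, fun i' hi' => hmax i' (by simpa using hi')⟩

/-- Rank invariance of lower-left blocks under reduction. -/
theorem rank_block_eq (hfinj : Function.Injective f)
    (hV1 : ∀ i j, f j < f i → V i j = 0) (hV2 : ∀ i, V i i = 1)
    (hRV : R = Δ * V) (P Q : C → Prop)
    (hQ : ∀ b b', Q b → f b' ≤ f b → Q b') :
    (R.submatrix (Subtype.val : {a // P a} → C) (Subtype.val : {b // Q b} → C)).rank =
    (Δ.submatrix (Subtype.val : {a // P a} → C) (Subtype.val : {b // Q b} → C)).rank := by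
  have key : R.submatrix (Subtype.val : {a // P a} → C) (Subtype.val : {b // Q b} → C) =
      Δ.submatrix (Subtype.val : {a // P a} → C) (Subtype.val : {b // Q b} → C) *
      V.submatrix (Subtype.val : {b // Q b} → C) (Subtype.val : {b // Q b} → C) := by
    ext a b
    have hz : ∀ c ∈ Finset.univ, c ∉ Finset.univ.filter Q → Δ a.1 c * V c b.1 = 0 := by
      intro c _ hc
      have hQc : ¬ Q c := by simpa using hc
      have : f b.1 < f c := by
        by_contra hle
        exact hQc (hQ _ _ b.2 (not_lt.mp hle))
      rw [hV1 _ _ this, mul_zero]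
    calc R a.1 b.1 = ∑ c : C, Δ a.1 c * V c b.1 := by rw [hRV, Matrix.mul_apply]
      _ = ∑ c ∈ Finset.univ.filter Q, Δ a.1 c * V c b.1 :=
          (Finset.sum_subset (Finset.filter_subset _ _) hz).symm
      _ = ∑ c : {b // Q b}, Δ a.1 c.1 * V c.1 b.1 := by
          rw [← Finset.sum_subtype (Finset.univ.filter Q) (by simp) (fun c => Δ a.1 c * V c b.1)]
      _ = _ := by rw [Matrix.mul_apply]; rfl
  rw [key]
  apply Matrix.rank_mul_eq_left_of_isUnit_det
  letI : LinearOrder {b // Q b} :=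
    LinearOrder.lift' (fun b => f b.1) (fun a b h => Subtype.ext (hfinj h))
  have h : (V.submatrix (Subtype.val : {b // Q b} → C) Subtype.val).BlockTriangular id :=
    fun i j hij => hV1 _ _ hij
  rw [Matrix.det_of_upperTriangular h]
  simp [hV2]

/-- The rank of a lower-left block of a reduced matrix is the number of its pivots. -/
theorem rank_block_eq_card (hfinj : Function.Injective f)
    (hred : ∀ i j j', IsLowF f R i j → IsLowF f R i j' → j = j')
    (P Q : C → Prop) (hP : ∀ a a', P a → f a ≤ f a' → P a') :
    (R.submatrix (Subtype.val : {a // P a} → C) (Subtype.val : {b // Q b} → C)).rank =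
      (lowCols f R P Q).card := by
  set S := {a // P a}
  set T := {b // Q b}
  set M := R.submatrix (Subtype.val : S → C) (Subtype.val : T → C) with hM
  set Z : Finset T := Finset.univ.filter (fun b => ∃ a, P a ∧ IsLowF f R a b.1) with hZ
  have hlow : ∀ z : ↥Z, ∃ a, P a ∧ IsLowF f R a z.1.1 := fun z =>
    (Finset.mem_filter.mp z.2).2
  choose A hAP hAlow using hlow
  have hzero : ∀ b : T, b ∉ Z → Mᵀ b = 0 := by
    intro b hb
    funext a
    by_contra h
    have h' : R a.1 b.1 ≠ 0 := h
    obtain ⟨a₀, ha₀⟩ := exists_low (f := f) h'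
    apply hb
    simp only [hZ, Finset.mem_filter, Finset.mem_univ, true_and]
    exact ⟨a₀, hP _ _ a.2 (ha₀.2 a.1 h'), ha₀⟩
  have hli : LinearIndependent (ZMod 2) (fun z : ↥Z => Mᵀ z.1) := by
    rw [Fintype.linearIndependent_iff]
    intro c hc
    by_contra hcon
    push_neg at hcon
    obtain ⟨z₁, hz₁⟩ := hcon
    have hsne : (Finset.univ.filter (fun z : ↥Z => c z ≠ 0)).Nonempty :=
      ⟨z₁, by simpa using hz₁⟩
    obtain ⟨z₀, hz₀s, hmax⟩ :=
      (Finset.univ.filter (fun z : ↥Z => c z ≠ 0)).exists_max_image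
        (fun z => f (A z)) hsne
    have hz₀c : c z₀ ≠ 0 := by simpa using hz₀s
    have hlz₀ := hAlow z₀
    have hPz₀ := hAP z₀
    set a₀ : S := ⟨A z₀, hPz₀⟩ with ha₀
    have hval := congrFun hc a₀
    rw [Finset.sum_apply] at hval
    have hsingle : ∀ z : ↥Z, z ∈ Finset.univ → z ≠ z₀ → (c z • Mᵀ z.1) a₀ = 0 := by
      intro z _ hzne
      by_cases hcz : c z = 0
      · simp [hcz]
      · have hzs : z ∈ Finset.univ.filter (fun z : ↥Z => c z ≠ 0) := by simpa using hcz
        have hle : f (A z) ≤ f (A z₀) := hmax z hzs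
        by_contra hne
        have hRne : R (A z₀) z.1.1 ≠ 0 := by
          intro h0
          apply hne
          simp only [Pi.smul_apply, hM, Matrix.transpose_apply, Matrix.submatrix_apply]
          rw [h0, smul_zero]
        have hlz := hAlow z
        have hge : f (A z₀) ≤ f (A z) := hlz.2 _ hRne
        have heq : A z = A z₀ := hfinj (le_antisymm hle hge)
        have : z.1.1 = z₀.1.1 := hred (A z) _ _ hlz (heq ▸ hlz₀)
        exact hzne (Subtype.ext (Subtype.ext this))
    rw [Finset.sum_eq_single_of_mem z₀ (Finset.mem_univ _) hsingle] at hval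
    simp only [Pi.smul_apply, hM, Matrix.transpose_apply, Matrix.submatrix_apply,
      smul_eq_mul] at hval
    exact hz₀c ((mul_eq_zero.mp hval).resolve_right hlz₀.1)
  have hspan : Submodule.span (ZMod 2) (Set.range Mᵀ) =
      Submodule.span (ZMod 2) (Set.range (fun z : ↥Z => Mᵀ z.1)) := by
    apply le_antisymm
    · rw [Submodule.span_le]
      rintro x ⟨b, rfl⟩
      by_cases hb : b ∈ Z
      · exact Submodule.subset_span ⟨⟨b, hb⟩, rfl⟩
      · rw [hzero b hb]; exact Submodule.zero_mem _
    · apply Submodule.span_mono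
      rintro x ⟨z, rfl⟩
      exact ⟨z.1, rfl⟩
  have hcZ : Z.card = (lowCols f R P Q).card := by
    apply Finset.card_bij (fun z _ => z.1)
    · intro z hz
      simp only [hZ, Finset.mem_filter, Finset.mem_univ, true_and] at hz
      simp only [lowCols, Finset.mem_filter, Finset.mem_univ, true_and]
      exact ⟨z.2, hz⟩
    · intro z _ z' _ h
      exact Subtype.ext h
    · intro b hb
      simp only [lowCols, Finset.mem_filter, Finset.mem_univ, true_and] at hb
      exact ⟨⟨b, hb.1⟩, by simpa [hZ] using hb.2, rfl⟩
  rw [Matrix.rank_eq_finrank_span_cols, show M.col = Mᵀ from rfl, hspan, finrank_span_eq_card hli,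
    Fintype.card_coe, hcZ]

theorem lowCols_split (hfinj : Function.Injective f) (i : C) (Q : C → Prop) :
    (lowCols f R (fun a => f i ≤ f a) Q).card =
      (lowCols f R (fun a => f i < f a) Q).card +
      (Finset.univ.filter (fun b => Q b ∧ IsLowF f R i b)).card := by
  rw [← Finset.card_union_of_disjoint]
  · congr 1
    ext b
    simp only [lowCols, Finset.mem_union, Finset.mem_filter, Finset.mem_univ, true_and]
    constructor
    · rintro ⟨hQ, a, hia, hlow⟩
      rcases lt_or_eq_of_le hia with h | h
      · exact Or.inl ⟨hQ, a, h, hlow⟩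
      · exact Or.inr ⟨hQ, (hfinj h) ▸ hlow⟩
    · rintro (⟨hQ, a, hia, hlow⟩ | ⟨hQ, hlow⟩)
      · exact ⟨hQ, a, le_of_lt hia, hlow⟩
      · exact ⟨hQ, i, le_refl _, hlow⟩
  · rw [Finset.disjoint_left]
    rintro b hb hb'
    simp only [lowCols, Finset.mem_filter, Finset.mem_univ, true_and] at hb hb'
    obtain ⟨hQ, a, hia, hlow⟩ := hb
    exact absurd (low_unique hfinj hlow hb'.2 ▸ hia) (lt_irrefl _)

theorem lowCols_count (hfinj : Function.Injective f) (i j : C) :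
    (lowCols f R (fun a => f i ≤ f a) (fun b => f b ≤ f j)).card
      + (lowCols f R (fun a => f i < f a) (fun b => f b < f j)).card
    = (lowCols f R (fun a => f i < f a) (fun b => f b ≤ f j)).card
      + (lowCols f R (fun a => f i ≤ f a) (fun b => f b < f j)).card
      + (if IsLowF f R i j then 1 else 0) := by
  rw [lowCols_split hfinj i (fun b => f b ≤ f j), lowCols_split hfinj i (fun b => f b < f j)]
  have key : (Finset.univ.filter (fun b => f b ≤ f j ∧ IsLowF f R i b)).card =
      (Finset.univ.filter (fun b => f b < f j ∧ IsLowF f R i b)).card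
      + (if IsLowF f R i j then 1 else 0) := by
    have hite : (if IsLowF f R i j then ({j} : Finset C) else ∅).card =
        (if IsLowF f R i j then 1 else 0) := by split_ifs <;> simp
    rw [← hite, ← Finset.card_union_of_disjoint]
    · congr 1
      ext b
      simp only [Finset.mem_union, Finset.mem_filter, Finset.mem_univ, true_and]
      constructor
      · rintro ⟨hbj, hlow⟩
        rcases lt_or_eq_of_le hbj with h | h
        · exact Or.inl ⟨h, hlow⟩
        · have : b = j := hfinj h
          subst this
          simp [hlow]
      · rintro (⟨hbj, hlow⟩ | hmem)
        · exact ⟨le_of_lt hbj, hlow⟩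
        · split_ifs at hmem with h
          · simp only [Finset.mem_singleton] at hmem
            subst hmem
            exact ⟨le_refl _, h⟩
          · simp at hmem
    · rw [Finset.disjoint_left]
      intro b hb hb'
      simp only [Finset.mem_filter, Finset.mem_univ, true_and] at hb
      split_ifs at hb' with h
      · simp only [Finset.mem_singleton] at hb'
        subst hb'
        exact absurd hb.1 (lt_irrefl _)
      · simp at hb'
  omega

/-- Pairing uniqueness: two reductions of the same matrix w.r.t. the same
filter have the same pivot pairs. -/
theorem pivots_unique {Rf Rg : Matrix C C (ZMod 2)} (hfinj : Function.Injective f)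
    (hRf : IsReductionF f Δ Rf) (hRg : IsReductionF f Δ Rg) (i j : C) :
    IsLowF f Rf i j ↔ IsLowF f Rg i j := by
  obtain ⟨V, hV1, hV2, hRV, hred⟩ := hRf
  obtain ⟨W, hW1, hW2, hRW, hred'⟩ := hRg
  have key : ∀ (P Q : C → Prop), (∀ a a', P a → f a ≤ f a' → P a') →
      (∀ b b', Q b → f b' ≤ f b → Q b') →
      (lowCols f Rf P Q).card = (lowCols f Rg P Q).card := by
    intro P Q hP hQ
    rw [← rank_block_eq_card hfinj hred P Q hP, ← rank_block_eq_card hfinj hred' P Q hP,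
        rank_block_eq hfinj hV1 hV2 hRV P Q hQ, rank_block_eq hfinj hW1 hW2 hRW P Q hQ]
  have c11 := key (fun a => f i ≤ f a) (fun b => f b ≤ f j)
    (fun a a' h h' => le_trans h h') (fun b b' h h' => le_trans h' h)
  have c22 := key (fun a => f i < f a) (fun b => f b < f j)
    (fun a a' h h' => lt_of_lt_of_le h h') (fun b b' h h' => lt_of_le_of_lt h' h)
  have c21 := key (fun a => f i < f a) (fun b => f b ≤ f j)
    (fun a a' h h' => lt_of_lt_of_le h h') (fun b b' h h' => le_trans h' h)
  have c12 := key (fun a => f i ≤ f a) (fun b => f b < f j)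
    (fun a a' h h' => le_trans h h') (fun b b' h h' => lt_of_le_of_lt h' h)
  have e1 := lowCols_count (R := Rf) hfinj i j
  have e2 := lowCols_count (R := Rg) hfinj i j
  rw [c11, c22, c21, c12] at e1
  have hite : (if IsLowF f Rf i j then 1 else 0) = (if IsLowF f Rg i j then 1 else 0) := by
    omega
  split_ifs at hite with h1 h2 h2 <;> simp_all

end Aux

/-- If two filters on a finite complex induce the same ordering of the cells,
then they have the same birth-death pairs. -/
theorem stmt6 {C : Type*} [Fintype C] (facet : C → C → Prop) (f g : C → ℝ)
    (hfinj : Function.Injective f) (hginj : Function.Injective g)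
    (hf : ∀ a b, facet a b → f a < f b) (hg : ∀ a b, facet a b → g a < g b)
    (horder : ∀ a b, f a < f b ↔ g a < g b)
    (Rf Rg : Matrix C C (ZMod 2))
    (hRf : IsReductionF f (bdry facet) Rf)
    (hRg : IsReductionF g (bdry facet) Rg) :
    ∀ a b, IsLowF f Rf a b ↔ IsLowF g Rg a b := by
  have hle : ∀ x y, f x ≤ f y ↔ g x ≤ g y := by
    intro x y
    rw [← not_lt, ← not_lt, horder]
  have hLow : ∀ (M : Matrix C C (ZMod 2)) (x y : C), IsLowF f M x y ↔ IsLowF g M x y := by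
    intro M x y
    constructor
    · rintro ⟨h1, h2⟩
      exact ⟨h1, fun i' hi' => (hle _ _).mp (h2 i' hi')⟩
    · rintro ⟨h1, h2⟩
      exact ⟨h1, fun i' hi' => (hle _ _).mpr (h2 i' hi')⟩
  have hRg' : IsReductionF f (bdry facet) Rg := by
    obtain ⟨W, hW1, hW2, hRW, hred⟩ := hRg
    exact ⟨W, fun i j h => hW1 i j ((horder j i).mp h), hW2, hRW,
      fun i j j' h h' => hred i j j' ((hLow _ _ _).mp h) ((hLow _ _ _).mp h')⟩
  intro a b
  rw [← hLow Rg a b]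
  exact pivots_unique hfinj hRf hRg' a b
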